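/- arXiv:2011.14931 — 3 statements merged into one kernel-verified Lean document; each statement's English description precedes it below -/
import Mathlib

section
/- Given an order-preserving injection θ : [m] ↪ [n] and a subset S of the complement of the image of θ in [n], there exists a unique factorization θ = θ'' ∘ θ' through [m + |S|] such that the image of θ'' : [m+|S|] ↪ [n] equals S ∪ Im(θ). -/
/-- Given an order-preserving injection `θ : [m] ↪ [n]` and a subset `S` of the complement
of the image of `θ`, there is a unique factorization of `θ` through `[m + |S|]` whose
second factor has image `S ∪ Im θ`. -/
theorem stmt1 (n m : ℕ) (θ : Fin (m + 1) ↪o Fin (n + 1)) (S : Finset (Fin (n + 1)))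
    (hS : ∀ x ∈ S, x ∉ Set.range θ) :
    ∃! p : (Fin (m + 1) ↪o Fin (m + S.card + 1)) × (Fin (m + S.card + 1) ↪o Fin (n + 1)),
      (∀ x, p.2 (p.1 x) = θ x) ∧ Set.range p.2 = ↑S ∪ Set.range θ := by
  classical
  set T : Finset (Fin (n + 1)) := S ∪ Finset.image θ Finset.univ with hT
  have hdisj : Disjoint S (Finset.image θ Finset.univ) := by
    rw [Finset.disjoint_left]
    intro a ha hb
    obtain ⟨x, -, rfl⟩ := Finset.mem_image.1 hb
    exact hS _ ha ⟨x, rfl⟩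
  have hcoeT : (↑T : Set (Fin (n + 1))) = ↑S ∪ Set.range θ := by
    rw [hT, Finset.coe_union, Finset.coe_image, Finset.coe_univ, Set.image_univ]
  have hcard : T.card = m + S.card + 1 := by
    rw [hT, Finset.card_union_of_disjoint hdisj,
      Finset.card_image_of_injective _ θ.injective, Finset.card_univ, Fintype.card_fin]
    omega
  have hmemθ : ∀ x, θ x ∈ T := fun x =>
    Finset.mem_union_right _ (Finset.mem_image.2 ⟨x, Finset.mem_univ _, rfl⟩)
  set e := T.orderIsoOfFin hcard with he
  set θ'' : Fin (m + S.card + 1) ↪o Fin (n + 1) := T.orderEmbOfFin hcard with hθ''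
  set θ' : Fin (m + 1) ↪o Fin (m + S.card + 1) :=
    OrderEmbedding.ofStrictMono (fun x => e.symm ⟨θ x, hmemθ x⟩)
      (fun a b hab => e.symm.strictMono (show (⟨θ a, _⟩ : T) < ⟨θ b, _⟩ from
        Subtype.mk_lt_mk.2 (θ.strictMono hab))) with hθ'
  have hfac : ∀ x, θ'' (θ' x) = θ x := by
    intro x
    show ↑(e (e.symm ⟨θ x, hmemθ x⟩)) = θ x
    rw [OrderIso.apply_symm_apply]
  refine ⟨⟨θ', θ''⟩, ⟨hfac, by rw [hθ'', Finset.range_orderEmbOfFin, hcoeT]⟩, ?_⟩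
  rintro ⟨q1, q2⟩ ⟨hq1, hq2⟩
  have h2 : q2 = θ'' := by
    apply Finset.orderEmbOfFin_unique' hcard
    intro x
    rw [← Finset.mem_coe, hcoeT, ← hq2]
    exact ⟨x, rfl⟩
  have h1 : q1 = θ' := by
    apply RelEmbedding.ext
    intro x
    apply θ''.injective
    rw [hfac, ← h2, hq1]
  rw [h1, h2]
end

section
/- If A ↪ B is a monomorphism of simplicial sets, X is a Kan complex, and a map f : A → X admits an extension to B in the homotopy category of simplicial sets (i.e., there exists g : B → X with g ∘ i homotopic to f), then f admits a strict extension f' : B → X with f' ∘ i = f. -/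
open CategoryTheory Simplicial Limits

/-- The constant map `A ⟶ Δ[1]` at the vertex `k`. -/
def constMap (A : SSet) (k : Fin 2) : A ⟶ Δ[1] where
  app m := TypeCat.ofHom fun _ => SSet.stdSimplex.const 1 k m
  naturality := by intro m m' φ; ext a; rfl

/-- Simplicial homotopy of maps `A ⟶ X`, via the cylinder `A × Δ[1]`. -/
def SHomotopic {A X : SSet} (f g : A ⟶ X) : Prop :=
  ∃ H : Limits.prod A Δ[1] ⟶ X,
    Limits.prod.lift (𝟙 A) (constMap A 0) ≫ H = f ∧
      Limits.prod.lift (𝟙 A) (constMap A 1) ≫ H = g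

namespace HEP

open SimplexCategory Opposite

lemma map_map {B : SSet} {x y z : SimplexCategory} (f : x ⟶ y) (g : y ⟶ z) (c : B.obj (op z)) :
    B.map (f ≫ g).op c = B.map f.op (B.map g.op c) := by
  rw [op_comp, FunctorToTypes.map_comp_apply]

open SimplexCategory

/-- A monotone section of a surjective monotone map passing through `k`. -/
lemma exists_section_through {x y : SimplexCategory} (e : x ⟶ y)
    (he : Function.Surjective e.toOrderHom) (k : Fin (x.len + 1)) :
    ∃ t : y ⟶ x, t ≫ e = 𝟙 y ∧ t.toOrderHom (e.toOrderHom k) = k := by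
  classical
  set g := e.toOrderHom with hg
  have fib : ∀ j : Fin (y.len+1), (Finset.univ.filter (fun z => g z = j)).Nonempty := by
    intro j
    obtain ⟨z, hz⟩ := he j
    exact ⟨z, by simpa using hz⟩
  have fib2 : ∀ j : Fin (y.len+1), j ≤ g k →
      (Finset.univ.filter (fun z => g z = j ∧ z ≤ k)).Nonempty := by
    intro j hj
    rcases lt_or_eq_of_le hj with h | h
    · obtain ⟨z, hz⟩ := he j
      have hzk : z ≤ k := by
        by_contra hzk
        push_neg at hzk
        have := g.monotone hzk.le
        rw [hz] at this
        exact absurd (lt_of_lt_of_le h this) (lt_irrefl _)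
      exact ⟨z, by simp [hz, hzk]⟩
    · exact ⟨k, by simp [← h]⟩
  set T : Fin (y.len+1) → Fin (x.len+1) := fun j =>
    if h : j ≤ g k then (Finset.univ.filter (fun z => g z = j ∧ z ≤ k)).max' (fib2 j h)
    else (Finset.univ.filter (fun z => g z = j)).min' (fib j) with hT
  have hTle : ∀ j (h : j ≤ g k), T j = (Finset.univ.filter (fun z => g z = j ∧ z ≤ k)).max' (fib2 j h) := by
    intro j h; simp only [hT]; rw [dif_pos h]
  have hTgt : ∀ j, ¬ (j ≤ g k) → T j = (Finset.univ.filter (fun z => g z = j)).min' (fib j) := by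
    intro j h; simp only [hT]; rw [dif_neg h]
  have hTmem : ∀ j, g (T j) = j := by
    intro j
    by_cases h : j ≤ g k
    · rw [hTle j h]
      have := (Finset.univ.filter (fun z => g z = j ∧ z ≤ k)).max'_mem (fib2 j h)
      simp only [Finset.mem_filter] at this
      exact this.2.1
    · rw [hTgt j h]
      have := (Finset.univ.filter (fun z => g z = j)).min'_mem (fib j)
      simp only [Finset.mem_filter] at this
      exact this.2
  have hTk : ∀ j (h : j ≤ g k), T j ≤ k := by
    intro j h
    rw [hTle j h]
    apply Finset.max'_le
    intro z hz
    simp only [Finset.mem_filter] at hz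
    exact hz.2.2
  have hTgk : T (g k) = k := by
    rw [hTle _ le_rfl]
    apply le_antisymm
    · apply Finset.max'_le; intro z hz; simp only [Finset.mem_filter] at hz; exact hz.2.2
    · apply Finset.le_max'; simp
  have hmono : Monotone T := by
    intro j j' hjj'
    rcases eq_or_lt_of_le hjj' with rfl | hlt
    · exact le_rfl
    by_cases h : j ≤ g k
    · by_cases h' : j' ≤ g k
      · rw [hTle j h, hTle j' h']
        apply Finset.max'_le
        intro z hz
        simp only [Finset.mem_filter] at hz
        by_contra hc
        push_neg at hc
        have : g ((Finset.univ.filter (fun w => g w = j' ∧ w ≤ k)).max' (fib2 j' h')) ≤ g z :=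
          g.monotone hc.le
        have e1 : g ((Finset.univ.filter (fun w => g w = j' ∧ w ≤ k)).max' (fib2 j' h')) = j' := by
          have := (Finset.univ.filter (fun w => g w = j' ∧ w ≤ k)).max'_mem (fib2 j' h')
          simp only [Finset.mem_filter] at this
          exact this.2.1
        rw [e1, hz.2.1] at this
        exact absurd (lt_of_lt_of_le hlt this) (lt_irrefl _)
      · -- T j ≤ k < T j'
        have h1 : T j ≤ k := hTk j h
        have h2 : k < T j' := by
          by_contra hc
          push_neg at hc
          have := g.monotone hc
          rw [hTmem j'] at this
          exact h' this
        exact h1.trans h2.le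
    · have h' : ¬ j' ≤ g k := fun hc => h (hjj'.trans hc)
      rw [hTgt j h, hTgt j' h']
      by_contra hc
      push_neg at hc
      have := g.monotone hc.le
      rw [← hTgt j h, ← hTgt j' h'] at this
      rw [hTmem j', hTmem j] at this
      exact absurd (lt_of_lt_of_le hlt this) (lt_irrefl _)
  refine ⟨Hom.mk ⟨T, hmono⟩, ?_, hTgk⟩
  apply SimplexCategory.Hom.ext
  apply OrderHom.ext
  funext j
  exact hTmem j


variable {B : SSet}

/-- `b` is nondegenerate if it does not factor through a strictly smaller epi. -/
def Nondeg {m : SimplexCategoryᵒᵖ} (b : B.obj m) : Prop :=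
  ∀ (p : SimplexCategory) (e : m.unop ⟶ p) (c : B.obj (op p)),
    Epi e → b = B.map e.op c → m.unop.len ≤ p.len

/-- Eilenberg–Zilber existence: every simplex is an epi-image of a nondegenerate one. -/
lemma exists_core {B : SSet} : ∀ (m : SimplexCategoryᵒᵖ) (b : B.obj m),
    ∃ (p : SimplexCategory) (e : m.unop ⟶ p) (c : B.obj (op p)),
      Epi e ∧ Nondeg c ∧ b = B.map e.op c ∧ p.len ≤ m.unop.len := by
  suffices H : ∀ (n : ℕ) (m : SimplexCategoryᵒᵖ), m.unop.len ≤ n → ∀ (b : B.obj m),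
      ∃ (p : SimplexCategory) (e : m.unop ⟶ p) (c : B.obj (op p)),
        Epi e ∧ Nondeg c ∧ b = B.map e.op c ∧ p.len ≤ m.unop.len by
    intro m b; exact H m.unop.len m le_rfl b
  intro n
  induction n with
  | zero =>
    intro m hm b
    refine ⟨m.unop, 𝟙 _, b, inferInstance, ?_, by simp, le_rfl⟩
    intro p e c he hb
    have := @len_le_of_epi _ _ e he
    simp only [unop_op] at this ⊢
    omega
  | succ n ih =>
    intro m hm b
    by_cases hb : Nondeg b
    · exact ⟨m.unop, 𝟙 _, b, inferInstance, hb, by simp, le_rfl⟩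
    · simp only [Nondeg, not_forall] at hb
      obtain ⟨p, e, c, he, hbc, hlt⟩ := hb
      push_neg at hlt
      have hple := @len_le_of_epi _ _ e he
      have hp : p.len ≤ n := by omega
      obtain ⟨q, e', c', he', hc', hcc, hq⟩ := ih (op p) (by simpa using hp) c
      simp only [unop_op] at hq e' ⊢
      refine ⟨q, e ≫ e', c', epi_comp _ _, hc', ?_, by omega⟩
      rw [hbc, hcc, map_map]

/-- If `b = w^* b` for nondegenerate `b` then `w = 𝟙`. -/
lemma endo_eq_id {x : SimplexCategory} {b : B.obj (op x)} (hb : Nondeg b)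
    (w : x ⟶ x) (hw : b = B.map w.op b) : w = 𝟙 _ := by
  by_cases hinj : Function.Injective w.toOrderHom
  · have : Mono w := mono_iff_injective.2 hinj
    exact eq_id_of_mono w
  · exfalso
    have hlen : SimplexCategory.mk x.len = x := SimplexCategory.mk_len x
    rcases hn : x.len with _ | n
    · refine hinj (fun a a' _ => ?_)
      have h1 : (a : ℕ) < x.len + 1 := a.isLt
      have h2 : (a' : ℕ) < x.len + 1 := a'.isLt
      ext; omega
    · rw [hn] at hlen
      subst hlen
      obtain ⟨i, w', hww⟩ := eq_σ_comp_of_not_injective w hinj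
      have hbb : b = B.map (SimplexCategory.σ i).op (B.map w'.op b) := by
        conv_lhs => rw [hw, hww, map_map]
      have := hb (SimplexCategory.mk n) (SimplexCategory.σ i) (B.map w'.op b)
        inferInstance hbb
      simp only [unop_op, len_mk] at this
      omega

/-- EZ uniqueness of the epi part. -/
lemma epi_unique {x p : SimplexCategory} {b : B.obj (op p)} (hb : Nondeg b)
    (e e' : x ⟶ p) (he : Epi e) (he' : Epi e')
    (heq : B.map e.op b = B.map e'.op b) : e = e' := by
  apply SimplexCategory.Hom.ext
  apply OrderHom.ext
  funext k
  obtain ⟨t, ht, htk⟩ := exists_section_through e' (epi_iff_surjective.1 he') k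
  have hb2 : b = B.map (t ≫ e).op b := by
    rw [map_map, heq, ← map_map, ht]
    simp
  have hid := endo_eq_id hb (t ≫ e) hb2
  have h2 : e.toOrderHom (t.toOrderHom (e'.toOrderHom k)) = e'.toOrderHom k := by
    have := congrArg (fun q : p ⟶ p => SimplexCategory.Hom.toOrderHom q (e'.toOrderHom k)) hid
    simpa using this
  rw [htk] at h2
  exact h2

/-- A nondegenerate simplex is recovered from any epi-image by a section. -/
lemma core_retract {x p : SimplexCategory} (b : B.obj (op p))
    (e : x ⟶ p) (he : Epi e) :
    ∃ t : p ⟶ x, B.map t.op (B.map e.op b) = b := by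
  obtain ⟨t, ht, -⟩ := exists_section_through e (epi_iff_surjective.1 he)
    ⟨0, Nat.succ_pos _⟩
  refine ⟨t, ?_⟩
  rw [← map_map, ht]
  simp


/-- `σ` is the constant map at `0`. -/
def IsZero {m : SimplexCategoryᵒᵖ} (σ : m.unop ⟶ ⦋1⦌) : Prop :=
  ∀ k, (σ.toOrderHom k : ℕ) = 0

/-- The base region: boundary prisms and the bottom face. -/
def D0 {n : ℕ} {m : SimplexCategoryᵒᵖ} (α : m.unop ⟶ ⦋n⦌)
    (σ : m.unop ⟶ ⦋1⦌) : Prop :=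
  ¬ Function.Surjective α.toOrderHom ∨ IsZero σ

/-- `(α, σ)` lies in the `l`-th maximal chain of `[n] × [1]`. -/
def InCh (l : ℕ) {n : ℕ} {m : SimplexCategoryᵒᵖ} (α : m.unop ⟶ ⦋n⦌)
    (σ : m.unop ⟶ ⦋1⦌) : Prop :=
  ∀ k, ((σ.toOrderHom k : ℕ) = 0 → (α.toOrderHom k : ℕ) ≤ l) ∧
    ((σ.toOrderHom k : ℕ) ≠ 0 → l ≤ (α.toOrderHom k : ℕ))

/-- The region covered after all prisms with index `≥ j` have been filled. -/
def Dj (j : ℕ) {n : ℕ} {m : SimplexCategoryᵒᵖ} (α : m.unop ⟶ ⦋n⦌)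
    (σ : m.unop ⟶ ⦋1⦌) : Prop :=
  D0 α σ ∨ ∃ l, j ≤ l ∧ l ≤ n ∧ InCh l α σ

lemma fin2 {m : SimplexCategoryᵒᵖ} (σ : m.unop ⟶ ⦋1⦌) (k) :
    (σ.toOrderHom k : ℕ) = 0 ∨ (σ.toOrderHom k : ℕ) = 1 := by
  have := (σ.toOrderHom k).isLt
  simp only [len_mk] at this
  omega

lemma comp_toOrderHom {x y z : SimplexCategory} (f : x ⟶ y) (g : y ⟶ z) (k) :
    (f ≫ g).toOrderHom k = g.toOrderHom (f.toOrderHom k) := rfl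

lemma D0_comp {n : ℕ} {m m' : SimplexCategoryᵒᵖ} (φ : m ⟶ m')
    {α : m.unop ⟶ ⦋n⦌} {σ} (h : D0 α σ) :
    D0 (φ.unop ≫ α) (φ.unop ≫ σ) := by
  rcases h with h | h
  · left
    intro hs
    exact h (fun v => by obtain ⟨k, hk⟩ := hs v; exact ⟨φ.unop.toOrderHom k, hk⟩)
  · right
    intro k
    exact h _

lemma InCh_comp {l n : ℕ} {m m' : SimplexCategoryᵒᵖ} (φ : m ⟶ m')
    {α : m.unop ⟶ ⦋n⦌} {σ} (h : InCh l α σ) :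
    InCh l (φ.unop ≫ α) (φ.unop ≫ σ) := fun k => h _

lemma Dj_comp {j n : ℕ} {m m' : SimplexCategoryᵒᵖ} (φ : m ⟶ m')
    {α : m.unop ⟶ ⦋n⦌} {σ} (h : Dj j α σ) :
    Dj j (φ.unop ≫ α) (φ.unop ≫ σ) := by
  rcases h with h | ⟨l, h1, h2, h3⟩
  · exact Or.inl (D0_comp φ h)
  · exact Or.inr ⟨l, h1, h2, InCh_comp φ h3⟩

lemma Dj_total {n : ℕ} {m : SimplexCategoryᵒᵖ} (α : m.unop ⟶ ⦋n⦌) (σ) :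
    Dj 0 α σ := by
  classical
  by_cases hz : IsZero σ
  · exact Or.inl (Or.inr hz)
  · -- let l := min over the k with σ k ≠ 0 of α k
    simp only [IsZero, not_forall] at hz
    obtain ⟨k₀, hk₀⟩ := hz
    set s := Finset.univ.filter (fun k => (σ.toOrderHom k : ℕ) ≠ 0) with hs
    have hsne : s.Nonempty := ⟨k₀, by simp only [hs, Finset.mem_filter, Finset.mem_univ, true_and]; exact hk₀⟩
    set k₁ := s.min' hsne with hk₁
    have hk₁mem : (σ.toOrderHom k₁ : ℕ) ≠ 0 := by
      have := s.min'_mem hsne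
      simp only [hs, Finset.mem_filter] at this
      exact this.2
    refine Or.inr ⟨(α.toOrderHom k₁ : ℕ), Nat.zero_le _, by
      have := (α.toOrderHom k₁).isLt
      simp only [len_mk] at this
      omega, ?_⟩
    intro k
    constructor
    · intro h0
      -- σ k = 0, so k < k₁ (all elements of s are ≥ ... ), hence α k ≤ α k₁
      have hk : k < k₁ ∨ k₁ ≤ k := by omega
      have : k ∉ s := by simp only [hs, Finset.mem_filter, Finset.mem_univ, true_and, not_not]; exact h0
      have hlt : k < k₁ := by
        rcases lt_or_ge k k₁ with h | h
        · exact h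
        · exfalso
          have := σ.toOrderHom.monotone h
          have h2 : (σ.toOrderHom k₁ : ℕ) ≤ (σ.toOrderHom k : ℕ) := this
          omega
      have := α.toOrderHom.monotone hlt.le
      exact this
    · intro h1
      have : k ∈ s := by simp only [hs, Finset.mem_filter, Finset.mem_univ, true_and]; exact h1
      have := s.min'_le k this
      exact α.toOrderHom.monotone this

section PrismMaps

variable (n j : ℕ)

/-- The vertical collapse `[n+1] ⟶ [n]` of the `j`-th prism. -/
def sig (hj : j ≤ n) : ⦋n+1⦌ ⟶ ⦋n⦌ :=
  SimplexCategory.Hom.mk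
    ⟨fun k => ⟨if (k : ℕ) ≤ j then min (k : ℕ) n else (k : ℕ) - 1, by
        have := k.isLt; simp only [len_mk] at this ⊢; split_ifs <;> omega⟩, by
      intro a b hab
      have hab' : (a : ℕ) ≤ b := hab
      simp only [Fin.mk_le_mk]
      split_ifs <;> omega⟩

/-- The time coordinate `[n+1] ⟶ [1]` of the `j`-th prism. -/
def sj : ⦋n+1⦌ ⟶ ⦋1⦌ :=
  SimplexCategory.Hom.mk
    ⟨fun k => ⟨if (k : ℕ) ≤ j then 0 else 1, by split_ifs <;> simp [len_mk]⟩, by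
      intro a b hab
      have hab' : (a : ℕ) ≤ b := hab
      simp only [Fin.mk_le_mk]
      split_ifs <;> omega⟩

variable {m : SimplexCategoryᵒᵖ}

/-- The factorization of a simplex of the cylinder through the `j`-th prism. -/
def gam (α : m.unop ⟶ ⦋n⦌) (σ : m.unop ⟶ ⦋1⦌) :
    m.unop ⟶ ⦋n+1⦌ :=
  SimplexCategory.Hom.mk
    ⟨fun k => ⟨if (σ.toOrderHom k : ℕ) = 0 then (α.toOrderHom k : ℕ)
        else (α.toOrderHom k : ℕ) + 1, by
      have := (α.toOrderHom k).isLt; simp only [len_mk] at this ⊢; split_ifs <;> omega⟩, by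
      intro a b hab
      have h1 : (α.toOrderHom a : ℕ) ≤ α.toOrderHom b := α.toOrderHom.monotone hab
      have h2 : (σ.toOrderHom a : ℕ) ≤ σ.toOrderHom b := σ.toOrderHom.monotone hab
      have h3 := fin2 σ a
      have h4 := fin2 σ b
      simp only [Fin.mk_le_mk]
      split_ifs <;> omega⟩

lemma gam_comp {m' : SimplexCategoryᵒᵖ} (φ : m ⟶ m') (α : m.unop ⟶ ⦋n⦌) (σ) :
    gam n (φ.unop ≫ α) (φ.unop ≫ σ) = φ.unop ≫ gam n α σ := by
  apply SimplexCategory.Hom.ext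
  apply OrderHom.ext
  funext k
  rfl

lemma gam_val (α : m.unop ⟶ ⦋n⦌) (σ) (k) :
    ((gam n α σ).toOrderHom k : ℕ) =
      if (σ.toOrderHom k : ℕ) = 0 then (α.toOrderHom k : ℕ) else (α.toOrderHom k : ℕ) + 1 :=
  rfl

lemma sig_val (hj : j ≤ n) (v : Fin (n+2)) :
    ((sig n j hj).toOrderHom v : ℕ) = if (v : ℕ) ≤ j then min (v : ℕ) n else (v : ℕ) - 1 :=
  rfl

lemma sj_val (v : Fin (n+2)) :
    ((sj n j).toOrderHom v : ℕ) = if (v : ℕ) ≤ j then 0 else 1 :=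
  rfl

lemma gam_sig {α : m.unop ⟶ ⦋n⦌} {σ} (hj : j ≤ n) (h : InCh j α σ) :
    gam n α σ ≫ sig n j hj = α ∧ gam n α σ ≫ sj n j = σ := by
  have key : ∀ k, (((sig n j hj).toOrderHom ((gam n α σ).toOrderHom k)) : ℕ)
        = (α.toOrderHom k : ℕ) ∧
      (((sj n j).toOrderHom ((gam n α σ).toOrderHom k)) : ℕ) = (σ.toOrderHom k : ℕ) := by
    intro k
    obtain ⟨hz, ho⟩ := h k
    have ha := (α.toOrderHom k).isLt
    simp only [len_mk] at ha
    rw [sig_val, sj_val, gam_val]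
    rcases fin2 σ k with h0 | h1
    · have hαj := hz h0
      simp only [if_pos h0]
      rw [if_pos hαj, if_pos hαj]
      constructor <;> omega
    · have hjα := ho (by omega)
      simp only [if_neg (show ¬ (σ.toOrderHom k : ℕ) = 0 by omega)]
      rw [if_neg (show ¬ ((α.toOrderHom k : ℕ) + 1 ≤ j) by omega),
        if_neg (show ¬ ((α.toOrderHom k : ℕ) + 1 ≤ j) by omega)]
      constructor <;> omega
  constructor <;>
  · apply SimplexCategory.Hom.ext
    apply OrderHom.ext
    funext k
    rw [comp_toOrderHom]
    ext
    first
    | exact (key k).1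
    | exact (key k).2

end PrismMaps
lemma map_map' {X : SSet} {m m' : SimplexCategoryᵒᵖ} (φ : m ⟶ m') {y : SimplexCategory}
    (e : m.unop ⟶ y) (c : X.obj (Opposite.op y)) :
    X.map (φ.unop ≫ e).op c = X.map φ (X.map e.op c) := by
  rw [op_comp, Quiver.Hom.op_unop, FunctorToTypes.map_comp_apply]

lemma eval_std {X : SSet} {n' : ℕ} (θ : Δ[n'] ⟶ X) {m : SimplexCategoryᵒᵖ} (s : Δ[n'].obj m) :
    θ.app m s = X.map (SSet.stdSimplex.objEquiv s).op
      (θ.app (op ⦋n'⦌) (SSet.stdSimplex.objEquiv.symm (𝟙 _))) := by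
  have h : Δ[n'].map (SSet.stdSimplex.objEquiv s).op (SSet.stdSimplex.objEquiv.symm (𝟙 _)) = s := by
    rw [SSet.stdSimplex.map_apply, Equiv.apply_symm_apply, Category.comp_id]
    exact (SSet.stdSimplex.objEquiv).symm_apply_apply s
  conv_lhs => rw [← h]
  rw [FunctorToTypes.naturality]

/-- Membership of prism-restricted simplices in the previously filled region. -/
lemma horn_to_D {n j : ℕ} (hj : j ≤ n) {m : SimplexCategoryᵒᵖ}
    (β : m.unop ⟶ ⦋n+1⦌) (k : Fin (n+2))
    (hk : ∀ i, β.toOrderHom i ≠ k) (hkj : (k : ℕ) ≠ j) :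
    Dj (j+1) (β ≫ sig n j hj) (β ≫ sj n j) := by
  have hkn := k.isLt
  have hβ : ∀ i, (β.toOrderHom i : ℕ) ≠ (k : ℕ) := by
    intro i hi
    exact hk i (by ext; exact hi)
  have hβlt : ∀ i, (β.toOrderHom i : ℕ) < n + 2 := by
    intro i; have := (β.toOrderHom i).isLt; simp only [len_mk] at this; omega
  rcases lt_trichotomy (k : ℕ) j with hlt | heq | hgt
  · -- value k never attained by β ≫ sig
    left; left
    intro hs
    obtain ⟨i, hi⟩ := hs ⟨(k : ℕ), by simp only [len_mk]; omega⟩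
    have hi' : (((β ≫ sig n j hj).toOrderHom) i : ℕ) = (k : ℕ) := by rw [hi]
    rw [comp_toOrderHom, sig_val] at hi'
    have := hβ i
    split_ifs at hi' <;> omega
  · exact absurd heq hkj
  · rcases lt_or_eq_of_le (show j + 1 ≤ (k:ℕ) by omega) with hgt2 | heq2
    · -- value k - 1 never attained
      left; left
      intro hs
      obtain ⟨i, hi⟩ := hs ⟨(k : ℕ) - 1, by simp only [len_mk]; omega⟩
      have hi' : (((β ≫ sig n j hj).toOrderHom) i : ℕ) = (k : ℕ) - 1 := by rw [hi]
      rw [comp_toOrderHom, sig_val] at hi'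
      have := hβ i
      have := hβlt i
      split_ifs at hi' <;> omega
    · -- k = j + 1
      by_cases hjn : j < n
      · right
        refine ⟨j+1, le_rfl, by omega, ?_⟩
        intro i
        rw [comp_toOrderHom, comp_toOrderHom, sig_val, sj_val]
        have h1 := hβ i
        have h2 := hβlt i
        constructor <;> intro h3 <;> split_ifs at h3 ⊢ <;> omega
      · -- j = n : all β i ≤ n, time coordinate is constant zero
        left; right
        intro i
        rw [comp_toOrderHom, sj_val]
        have h1 := hβ i
        have h2 := hβlt i
        rw [if_pos (by omega)]

/-- Existence of a free face for the canonical lift of a `j`-chain simplex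
already lying in the previously filled region. -/
lemma exists_miss {n j : ℕ} (hj : j ≤ n) {m : SimplexCategoryᵒᵖ}
    {α : m.unop ⟶ ⦋n⦌} {σ} (hin : InCh j α σ) (hD : Dj (j+1) α σ) :
    ∃ k : Fin (n+2), (∀ i, (gam n α σ).toOrderHom i ≠ k) ∧ (k : ℕ) ≠ j := by
  have hval : ∀ i, ((gam n α σ).toOrderHom i : ℕ) =
      if (σ.toOrderHom i : ℕ) = 0 then (α.toOrderHom i : ℕ) else (α.toOrderHom i : ℕ) + 1 :=
    gam_val n α σ
  have hne : ∀ (k : Fin (n+2)), (∀ i, ((gam n α σ).toOrderHom i : ℕ) ≠ (k : ℕ)) →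
      ∀ i, (gam n α σ).toOrderHom i ≠ k := by
    intro k h i hik
    exact h i (by rw [hik])
  rcases hD with (hns | hz) | ⟨l, hl1, hl2, hInl⟩
  · -- α not surjective
    simp only [Function.Surjective, not_forall] at hns
    obtain ⟨v, hv⟩ := hns
    have hvn := v.isLt
    change (v : ℕ) < n + 1 at hvn
    have hv' : ∀ i, (α.toOrderHom i : ℕ) ≠ (v : ℕ) := by
      intro i hi
      exact hv ⟨i, by ext; exact hi⟩
    rcases lt_or_ge (v : ℕ) j with hlt | hge
    · refine ⟨⟨v, by omega⟩, hne _ ?_, by simp; omega⟩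
      intro i
      rw [hval]
      have h1 := hv' i
      have h2 := (hin i).2
      rcases fin2 σ i with h0 | h1' <;> split_ifs <;> simp <;> omega
    · refine ⟨⟨(v : ℕ) + 1, by omega⟩, hne _ ?_, by simp; omega⟩
      intro i
      rw [hval]
      have h1 := hv' i
      have h2 := (hin i).1
      rcases fin2 σ i with h0 | h1' <;> split_ifs <;> simp <;> omega
  · -- σ constant zero
    refine ⟨⟨n+1, by omega⟩, hne _ ?_, by simp; omega⟩
    intro i
    rw [hval, if_pos (hz i)]
    have := (α.toOrderHom i).isLt
    simp only [len_mk] at this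
    simp
    omega
  · -- in a higher chain
    refine ⟨⟨j+1, by omega⟩, hne _ ?_, by simp⟩
    intro i
    rw [hval]
    have h1 := (hin i).1
    have h2 := (hInl i).2
    split_ifs with h0
    · have := h1 h0; simp; omega
    · have := h2 h0; simp; omega

/-- A compatible partial filling of the cylinder over `Δ[n]`, defined on `Dj j`. -/
structure Filling (X : SSet) (n : ℕ)
    (F₀ : ∀ ⦃m : SimplexCategoryᵒᵖ⦄, (m.unop ⟶ ⦋n⦌) →
      (m.unop ⟶ ⦋1⦌) → X.obj m) (j : ℕ) where
  F : ∀ ⦃m : SimplexCategoryᵒᵖ⦄, (m.unop ⟶ ⦋n⦌) →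
      (m.unop ⟶ ⦋1⦌) → X.obj m
  nat : ∀ {m m' : SimplexCategoryᵒᵖ} (φ : m ⟶ m') (α : m.unop ⟶ ⦋n⦌)
      (σ : m.unop ⟶ ⦋1⦌), Dj j α σ →
      F (φ.unop ≫ α) (φ.unop ≫ σ) = X.map φ (F α σ)
  agree : ∀ {m : SimplexCategoryᵒᵖ} (α : m.unop ⟶ ⦋n⦌)
      (σ : m.unop ⟶ ⦋1⦌), D0 α σ → F α σ = F₀ α σ

lemma step {X : SSet} [SSet.KanComplex X] {n j : ℕ} (hj : j ≤ n)
    {F₀ : ∀ ⦃m : SimplexCategoryᵒᵖ⦄, (m.unop ⟶ ⦋n⦌) →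
      (m.unop ⟶ ⦋1⦌) → X.obj m}
    (G : Filling X n F₀ (j+1)) : Nonempty (Filling X n F₀ j) := by
  classical
  set jf : Fin (n+2) := ⟨j, by omega⟩ with hjf
  -- the horn map
  set hmap : (Λ[n+1, jf] : SSet) ⟶ X := {
    app := fun m => TypeCat.ofHom fun β => G.F ((SSet.stdSimplex.objEquiv β.1) ≫ sig n j hj)
        ((SSet.stdSimplex.objEquiv β.1) ≫ sj n j)
    naturality := by
      intro m m' φ
      ext β
      show G.F ((SSet.stdSimplex.objEquiv (Δ[n+1].map φ β.1)) ≫ sig n j hj)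
          ((SSet.stdSimplex.objEquiv (Δ[n+1].map φ β.1)) ≫ sj n j)
        = X.map φ (G.F ((SSet.stdSimplex.objEquiv β.1) ≫ sig n j hj)
          ((SSet.stdSimplex.objEquiv β.1) ≫ sj n j))
      have hobj : (SSet.stdSimplex.objEquiv (Δ[n+1].map φ β.1))
          = φ.unop ≫ (SSet.stdSimplex.objEquiv β.1) := by
        rw [SSet.stdSimplex.map_apply, Equiv.apply_symm_apply]
      rw [hobj, Category.assoc, Category.assoc]
      apply G.nat
      -- membership via horn condition
      obtain ⟨k, hk⟩ := Set.ne_univ_iff_exists_notMem _ |>.1 β.2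
      simp only [Set.mem_union, Set.mem_range, Set.mem_singleton_iff, not_or, not_exists] at hk
      exact horn_to_D hj _ k hk.1 (fun hc => hk.2 (by ext; exact hc)) } with hhmap
  obtain ⟨θ, hθ⟩ := SSet.KanComplex.hornFilling hmap
  set x : X.obj (op ⦋n+1⦌) :=
    θ.app (op ⦋n+1⦌) (SSet.stdSimplex.objEquiv.symm (𝟙 _)) with hx
  -- the value of the filler on arbitrary simplices of the horn
  have hval : ∀ {m : SimplexCategoryᵒᵖ} (β : m.unop ⟶ ⦋n+1⦌)
      (hb : Set.range (SSet.stdSimplex.asOrderHom ((SSet.stdSimplex.objEquiv).symm β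
          : Δ[n+1].obj m)) ∪ {jf} ≠ Set.univ),
      G.F (β ≫ sig n j hj) (β ≫ sj n j) = X.map β.op x := by
    intro m β hb
    have h1 : hmap.app m ⟨(SSet.stdSimplex.objEquiv).symm β, hb⟩
        = G.F (β ≫ sig n j hj) (β ≫ sj n j) := by
      show G.F ((SSet.stdSimplex.objEquiv
          ((SSet.stdSimplex.objEquiv).symm β)) ≫ sig n j hj) _ = _
      rw [Equiv.apply_symm_apply]
    rw [← h1, hθ]
    show θ.app m ((SSet.stdSimplex.objEquiv).symm β) = X.map β.op x
    rw [eval_std θ, Equiv.apply_symm_apply]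
  -- well-definedness on the overlap
  have hW : ∀ {m : SimplexCategoryᵒᵖ} (α : m.unop ⟶ ⦋n⦌) (σ),
      InCh j α σ → Dj (j+1) α σ → G.F α σ = X.map (gam n α σ).op x := by
    intro m α σ hin hD
    obtain ⟨k, hk1, hk2⟩ := exists_miss hj hin hD
    have hb : Set.range (SSet.stdSimplex.asOrderHom ((SSet.stdSimplex.objEquiv).symm (gam n α σ)
        : Δ[n+1].obj m)) ∪ {jf} ≠ Set.univ := by
      rw [Set.ne_univ_iff_exists_notMem]
      refine ⟨k, ?_⟩
      simp only [Set.mem_union, Set.mem_range, Set.mem_singleton_iff, not_or, not_exists]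
      exact ⟨fun i hi => hk1 i hi, fun hc => hk2 (by rw [hc])⟩
    have := hval (gam n α σ) hb
    obtain ⟨hs1, hs2⟩ := gam_sig _ _ hj hin
    rw [hs1, hs2] at this
    exact this
  -- the extended filling
  refine ⟨⟨fun m α σ => if h : Dj (j+1) α σ then G.F α σ else X.map (gam n α σ).op x, ?_, ?_⟩⟩
  · intro m m' φ α σ hDj
    dsimp only
    by_cases h1 : Dj (j+1) α σ
    · rw [dif_pos h1, dif_pos (Dj_comp φ h1)]
      exact G.nat φ α σ h1
    · have hin : InCh j α σ := by
        rcases hDj with h0 | ⟨l, hl1, hl2, hl3⟩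
        · exact absurd (Or.inl h0) h1
        · rcases lt_or_eq_of_le hl1 with hll | hll
          · exact absurd (Or.inr ⟨l, by omega, hl2, hl3⟩) h1
          · rwa [hll]
      rw [dif_neg h1]
      by_cases h2 : Dj (j+1) (φ.unop ≫ α) (φ.unop ≫ σ)
      · rw [dif_pos h2]
        rw [hW _ _ (InCh_comp φ hin) h2, gam_comp, map_map']
      · rw [dif_neg h2, gam_comp, map_map']
  · intro m α σ h0
    dsimp only
    rw [dif_pos (show Dj (j+1) α σ from Or.inl h0)]
    exact G.agree α σ h0

/-- The prism-filling lemma: a compatible family on the boundary prisms and the bottom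
face of the cylinder over `Δ[n]` extends to a fully natural family, provided `X` is Kan. -/
theorem prism {X : SSet} [SSet.KanComplex X] {n : ℕ}
    (F₀ : ∀ ⦃m : SimplexCategoryᵒᵖ⦄, (m.unop ⟶ ⦋n⦌) →
      (m.unop ⟶ ⦋1⦌) → X.obj m)
    (h0 : ∀ {m m' : SimplexCategoryᵒᵖ} (φ : m ⟶ m') (α : m.unop ⟶ ⦋n⦌)
      (σ : m.unop ⟶ ⦋1⦌), D0 α σ →
      F₀ (φ.unop ≫ α) (φ.unop ≫ σ) = X.map φ (F₀ α σ)) :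
    ∃ K : ∀ ⦃m : SimplexCategoryᵒᵖ⦄, (m.unop ⟶ ⦋n⦌) →
      (m.unop ⟶ ⦋1⦌) → X.obj m,
      (∀ {m m' : SimplexCategoryᵒᵖ} (φ : m ⟶ m') (α : m.unop ⟶ ⦋n⦌)
        (σ : m.unop ⟶ ⦋1⦌),
        K (φ.unop ≫ α) (φ.unop ≫ σ) = X.map φ (K α σ)) ∧
      (∀ {m : SimplexCategoryᵒᵖ} (α : m.unop ⟶ ⦋n⦌)
        (σ : m.unop ⟶ ⦋1⦌), D0 α σ → K α σ = F₀ α σ) := by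
  have base : Nonempty (Filling X n F₀ (n+1)) := by
    refine ⟨⟨F₀, ?_, fun α σ _ => rfl⟩⟩
    intro m m' φ α σ hD
    rcases hD with h | ⟨l, hl1, hl2, _⟩
    · exact h0 φ α σ h
    · omega
  have desc : ∀ d : ℕ, d ≤ n + 1 → Nonempty (Filling X n F₀ (n+1-d)) := by
    intro d
    induction d with
    | zero => intro _; simpa using base
    | succ d ih =>
      intro hd
      obtain ⟨G⟩ := ih (by omega)
      have he : n + 1 - d = (n + 1 - (d+1)) + 1 := by omega
      rw [he] at G
      exact step (by omega) G
  obtain ⟨G⟩ := desc (n+1) le_rfl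
  simp only [Nat.sub_self] at G
  exact ⟨G.F, fun φ α σ => G.nat φ α σ (Dj_total α σ), G.agree⟩



/-- The constant time-coordinates. -/
def c0 (m : SimplexCategoryᵒᵖ) : m.unop ⟶ ⦋1⦌ :=
  SimplexCategory.Hom.mk (OrderHom.const _ 0)

def c1 (m : SimplexCategoryᵒᵖ) : m.unop ⟶ ⦋1⦌ :=
  SimplexCategory.Hom.mk (OrderHom.const _ 1)

lemma c0_comp {m m' : SimplexCategoryᵒᵖ} (φ : m ⟶ m') : φ.unop ≫ c0 m = c0 m' := by
  apply SimplexCategory.Hom.ext; apply OrderHom.ext; funext k; rfl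

lemma c1_comp {m m' : SimplexCategoryᵒᵖ} (φ : m ⟶ m') : φ.unop ≫ c1 m = c1 m' := by
  apply SimplexCategory.Hom.ext; apply OrderHom.ext; funext k; rfl

lemma isZero_c0 (m : SimplexCategoryᵒᵖ) : IsZero (c0 m) := fun _ => rfl

lemma isZero_eq_c0 {m : SimplexCategoryᵒᵖ} {σ : m.unop ⟶ ⦋1⦌}
    (h : IsZero σ) : σ = c0 m := by
  apply SimplexCategory.Hom.ext; apply OrderHom.ext; funext k
  ext
  exact h k

variable {A B X : SSet}

/-- A partial extension of the data `(g, H)` over a subcomplex of `B`. -/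
structure PM (i : A ⟶ B) (g : B ⟶ X)
    (H : ∀ ⦃m : SimplexCategoryᵒᵖ⦄, A.obj m → (m.unop ⟶ ⦋1⦌) → X.obj m) where
  S : ∀ m : SimplexCategoryᵒᵖ, Set (B.obj m)
  k : ∀ ⦃m : SimplexCategoryᵒᵖ⦄, B.obj m → (m.unop ⟶ ⦋1⦌) → X.obj m
  closed : ∀ {m m' : SimplexCategoryᵒᵖ} (φ : m ⟶ m') (t : B.obj m), t ∈ S m → B.map φ t ∈ S m'
  nat : ∀ {m m' : SimplexCategoryᵒᵖ} (φ : m ⟶ m') (t : B.obj m) (σ), t ∈ S m →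
    k (B.map φ t) (φ.unop ≫ σ) = X.map φ (k t σ)
  zero : ∀ {m : SimplexCategoryᵒᵖ} (t : B.obj m), k t (c0 m) = g.app m t
  hA : ∀ {m : SimplexCategoryᵒᵖ} (a : A.obj m), i.app m a ∈ S m
  kA : ∀ {m : SimplexCategoryᵒᵖ} (a : A.obj m) (σ), k (i.app m a) σ = H a σ

/-- The extension order on partial extensions. -/
def PMle {i : A ⟶ B} {g : B ⟶ X} {H} (P Q : PM i g H) : Prop :=
  (∀ m, P.S m ⊆ Q.S m) ∧ ∀ {m : SimplexCategoryᵒᵖ} (t : B.obj m) σ, t ∈ P.S m → P.k t σ = Q.k t σ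

lemma PMle_trans {i : A ⟶ B} {g : B ⟶ X} {H} {P Q R : PM i g H}
    (h1 : PMle P Q) (h2 : PMle Q R) : PMle P R :=
  ⟨fun m => (h1.1 m).trans (h2.1 m),
   fun t σ ht => (h1.2 t σ ht).trans (h2.2 t σ (h1.1 _ ht))⟩

/-- The base partial extension, defined on the image of `A`. -/
noncomputable def basePM (i : A ⟶ B) (g : B ⟶ X)
    (H : ∀ ⦃m : SimplexCategoryᵒᵖ⦄, A.obj m → (m.unop ⟶ ⦋1⦌) → X.obj m)
    (hi : ∀ m, Function.Injective (i.app m))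
    (Hnat : ∀ {m m' : SimplexCategoryᵒᵖ} (φ : m ⟶ m') (a : A.obj m) (σ),
      H (A.map φ a) (φ.unop ≫ σ) = X.map φ (H a σ))
    (H0 : ∀ {m : SimplexCategoryᵒᵖ} (a : A.obj m), H a (c0 m) = g.app m (i.app m a)) :
    PM i g H := by
  classical
  refine
  { S := fun m => Set.range (i.app m)
    k := fun m t σ => if h : ∃ a, i.app m a = t then H (Classical.choose h) σ else g.app m t
    closed := ?_, nat := ?_, zero := ?_, hA := fun a => ⟨a, rfl⟩, kA := ?_ }
  · rintro m m' φ t ⟨a, rfl⟩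
    exact ⟨A.map φ a, NatTrans.naturality_apply i φ a⟩
  · rintro m m' φ t σ ⟨a, rfl⟩
    have e1 : ∀ {mm : SimplexCategoryᵒᵖ} (aa : A.obj mm) (σσ),
        (if h : ∃ a', i.app mm a' = i.app mm aa then H (Classical.choose h) σσ
          else g.app mm (i.app mm aa)) = H aa σσ := by
      intro mm aa σσ
      rw [dif_pos ⟨aa, rfl⟩]
      congr 1
      exact hi mm (Classical.choose_spec (⟨aa, rfl⟩ : ∃ a', i.app mm a' = i.app mm aa))
    have e2 : B.map φ (i.app m a) = i.app m' (A.map φ a) :=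
      (NatTrans.naturality_apply i φ a).symm
    dsimp only
    rw [e2, e1, e1, Hnat]
  · intro m t
    dsimp only
    split_ifs with h
    · rw [H0, Classical.choose_spec h]
    · rfl
  · intro m a σ
    dsimp only
    exact (by
      rw [dif_pos ⟨a, rfl⟩]
      congr 1
      exact hi m (Classical.choose_spec (⟨a, rfl⟩ : ∃ a', i.app m a' = i.app m a)))

/-- Chains of partial extensions are bounded. -/
lemma chains_bounded (i : A ⟶ B) (g : B ⟶ X)
    (H : ∀ ⦃m : SimplexCategoryᵒᵖ⦄, A.obj m → (m.unop ⟶ ⦋1⦌) → X.obj m)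
    (P₀ : PM i g H) (c : Set (PM i g H)) (hc : IsChain PMle c) :
    ∃ ub, ∀ P ∈ c, PMle P ub := by
  classical
  rcases c.eq_empty_or_nonempty with rfl | ⟨Pc, hPc⟩
  · exact ⟨P₀, fun P hP => absurd hP (Set.notMem_empty P)⟩
  have hag : ∀ {m : SimplexCategoryᵒᵖ} (t : B.obj m) σ (P : PM i g H), P ∈ c → t ∈ P.S m →
      (if h : ∃ P ∈ c, t ∈ P.S m then (Classical.choose h).k t σ else g.app m t) = P.k t σ := by
    intro m t σ P hP ht
    rw [dif_pos ⟨P, hP, ht⟩]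
    obtain ⟨hQc, hQS⟩ := Classical.choose_spec (⟨P, hP, ht⟩ : ∃ P ∈ c, t ∈ P.S m)
    rcases eq_or_ne (Classical.choose (⟨P, hP, ht⟩ : ∃ P ∈ c, t ∈ P.S m)) P with heq | hne
    · rw [heq]
    · rcases hc hQc hP hne with h | h
      · exact (h.2 t σ hQS)
      · exact (h.2 t σ ht).symm
  refine ⟨{
    S := fun m => {t | ∃ P ∈ c, t ∈ P.S m}
    k := fun m t σ => if h : ∃ P ∈ c, t ∈ P.S m
      then (Classical.choose h).k t σ else g.app m t
    closed := by
      rintro m m' φ t ⟨P, hP, ht⟩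
      exact ⟨P, hP, P.closed φ t ht⟩
    nat := ?_, zero := ?_, hA := ?_, kA := ?_ }, ?_⟩
  all_goals {
    first
    | -- nat
      (rintro m m' φ t σ ⟨P, hP, ht⟩
       dsimp only
       rw [hag t σ P hP ht, hag (B.map φ t) (φ.unop ≫ σ) P hP (P.closed φ t ht)]
       exact P.nat φ t σ ht)
    | -- zero
      (intro m t
       dsimp only
       split_ifs with h
       · obtain ⟨hQc, hQS⟩ := Classical.choose_spec h
         exact (Classical.choose h).zero t
       · rfl)
    | -- hA
      (intro m a
       exact ⟨Pc, hPc, Pc.hA a⟩)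
    | -- kA
      (intro m a σ
       dsimp only
       rw [hag (i.app m a) σ Pc hPc (Pc.hA a)]
       exact Pc.kA a σ)
    | -- upper bound
      (intro P hP
       refine ⟨fun m t ht => ⟨P, hP, ht⟩, ?_⟩
       intro m t σ ht
       exact (hag t σ P hP ht).symm)
  }


lemma not_maximal {A B X : SSet} [SSet.KanComplex X] {i : A ⟶ B} {g : B ⟶ X}
    {H : ∀ ⦃m : SimplexCategoryᵒᵖ⦄, A.obj m → (m.unop ⟶ ⦋1⦌) → X.obj m}
    (P : PM i g H) (m₁ : SimplexCategoryᵒᵖ) (t₁ : B.obj m₁) (ht₁ : t₁ ∉ P.S m₁) :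
    ∃ Q : PM i g H, PMle P Q ∧ ¬ PMle Q P := by
  classical
  have hNe : ∃ d : ℕ, ∃ m : SimplexCategoryᵒᵖ, m.unop.len = d ∧ ∃ t : B.obj m, t ∉ P.S m :=
    ⟨m₁.unop.len, m₁, rfl, t₁, ht₁⟩
  set nn := Nat.find hNe with hnn
  obtain ⟨m₂, hm₂, t₂, ht₂⟩ := Nat.find_spec hNe
  have hmin : ∀ (m : SimplexCategoryᵒᵖ) (t : B.obj m), m.unop.len < nn → t ∈ P.S m := by
    intro m t hlt
    by_contra hts
    have hfind : nn ≤ m.unop.len := Nat.find_le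
      (⟨m, rfl, t, hts⟩ : ∃ mm : SimplexCategoryᵒᵖ, mm.unop.len = m.unop.len
        ∧ ∃ t' : B.obj mm, t' ∉ P.S mm)
    omega
  obtain ⟨p, e, b0, he, hb0, hfac, hple⟩ := exists_core m₂ t₂
  have hb0S : b0 ∉ P.S (op p) := fun hmem => ht₂ (hfac ▸ P.closed e.op b0 hmem)
  have hplen : p.len = nn := by
    have h1 : nn ≤ p.len := Nat.find_le ⟨op p, rfl, b0, hb0S⟩
    omega
  have hpeq : ⦋nn⦌ = p := by rw [← hplen]
  set u : ⦋nn⦌ ⟶ p := eqToHom hpeq with hu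
  set v : p ⟶ ⦋nn⦌ := eqToHom hpeq.symm with hv
  have huv : u ≫ v = 𝟙 _ := by rw [hu, hv, eqToHom_trans, eqToHom_refl]
  have hvu : v ≫ u = 𝟙 _ := by rw [hu, hv, eqToHom_trans, eqToHom_refl]
  haveI hEu : Epi u := inferInstance
  have hvsurj : Function.Surjective v.toOrderHom := by
    intro y
    refine ⟨u.toOrderHom y, ?_⟩
    exact congrArg (fun w : ⦋nn⦌ ⟶ ⦋nn⦌ => w.toOrderHom y) huv
  have hsurj_of : ∀ {m : SimplexCategoryᵒᵖ} (α : m.unop ⟶ ⦋nn⦌),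
      Function.Surjective (α ≫ u).toOrderHom → Function.Surjective α.toOrderHom := by
    intro m α hs
    have : α = (α ≫ u) ≫ v := by rw [Category.assoc, huv, Category.comp_id]
    rw [this]
    exact hvsurj.comp hs
  have hsmall : ∀ {m : SimplexCategoryᵒᵖ} (α' : m.unop ⟶ p),
      ¬ Function.Surjective α'.toOrderHom → B.map α'.op b0 ∈ P.S m := by
    intro m α' hns
    haveI hmono : Mono (Limits.image.ι α') := inferInstance
    have hlen : (Limits.image α').len < p.len := by
      rcases lt_or_eq_of_le (len_le_of_mono (Limits.image.ι α')) with hlt | heq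
      · exact hlt
      · exfalso
        apply hns
        have hbij : Function.Bijective (Limits.image.ι α').toOrderHom := by
          rw [Fintype.bijective_iff_injective_and_card]
          exact ⟨mono_iff_injective.1 hmono, by simp [heq]⟩
        have hsurj2 : Function.Surjective (Limits.factorThruImage α').toOrderHom :=
          epi_iff_surjective.1 inferInstance
        have hre : α' = Limits.factorThruImage α' ≫ Limits.image.ι α' := (Limits.image.fac α').symm
        rw [hre]
        exact hbij.surjective.comp hsurj2
    have hc' : B.map (Limits.image.ι α').op b0 ∈ P.S (op (Limits.image α')) :=
      hmin _ _ (by simpa using (by omega : (Limits.image α').len < nn))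
    have hre : B.map α'.op b0
        = B.map (Limits.factorThruImage α').op (B.map (Limits.image.ι α').op b0) := by
      rw [← map_map, Limits.image.fac]
    rw [hre]
    exact P.closed _ _ hc'
  have hSepi : ∀ {m : SimplexCategoryᵒᵖ} (α' : m.unop ⟶ p), Epi α' →
      B.map α'.op b0 ∈ P.S m → False := by
    intro m α' hα' hmem
    obtain ⟨t', ht'⟩ := core_retract b0 α' hα'
    exact hb0S (ht' ▸ P.closed t'.op _ hmem)
  have hcomp : ∀ {m m' : SimplexCategoryᵒᵖ} (φ : m ⟶ m')
      (α : m.unop ⟶ ⦋nn⦌),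
      B.map ((φ.unop ≫ α) ≫ u).op b0 = B.map φ (B.map (α ≫ u).op b0) := by
    intro m m' φ α
    rw [Category.assoc]
    exact map_map' φ (α ≫ u) b0
  -- the filler over the prism of the new nondegenerate simplex
  obtain ⟨K, Knat, Kagree⟩ := prism (X := X) (n := nn)
    (fun m α σ => P.k (B.map (α ≫ u).op b0) σ) (by
      intro m m' φ α σ hD
      dsimp only
      rcases hD with hns | hz
      · have hmem : B.map (α ≫ u).op b0 ∈ P.S m := hsmall (α ≫ u) (fun hs => hns (hsurj_of α hs))
        rw [hcomp]
        exact P.nat φ _ σ hmem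
      · have hz' : IsZero (φ.unop ≫ σ) := fun k => hz _
        rw [isZero_eq_c0 hz', isZero_eq_c0 hz, P.zero, P.zero, hcomp]
        exact NatTrans.naturality_apply g φ _)
  -- uniqueness of the representing epi
  have kuniq : ∀ {m : SimplexCategoryᵒᵖ} {α α' : m.unop ⟶ ⦋nn⦌},
      Function.Surjective α.toOrderHom → Function.Surjective α'.toOrderHom →
      B.map (α ≫ u).op b0 = B.map (α' ≫ u).op b0 → α = α' := by
    intro m α α' h1 h2 heq
    haveI hε1 : Epi α := epi_iff_surjective.2 h1
    haveI hε2 : Epi α' := epi_iff_surjective.2 h2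
    have := epi_unique hb0 (α ≫ u) (α' ≫ u) (epi_comp _ _) (epi_comp _ _) heq
    have h3 := congrArg (fun w => w ≫ v) this
    simpa only [Category.assoc, huv, Category.comp_id] using h3
  set Cs : ∀ m : SimplexCategoryᵒᵖ, Set (B.obj m) := fun m =>
    {t | ∃ α : m.unop ⟶ ⦋nn⦌, Function.Surjective α.toOrderHom ∧
      t = B.map (α ≫ u).op b0} with hCs
  set k' : ∀ ⦃m : SimplexCategoryᵒᵖ⦄, B.obj m → (m.unop ⟶ ⦋1⦌) → X.obj m :=
    fun m t σ => if h : t ∉ P.S m ∧ t ∈ Cs m then K (Classical.choose h.2) σ else P.k t σ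
    with hk'
  have kspec : ∀ {m : SimplexCategoryᵒᵖ} (t : B.obj m) (σ) (h1 : t ∉ P.S m)
      (α : m.unop ⟶ ⦋nn⦌) (h2 : Function.Surjective α.toOrderHom)
      (h3 : t = B.map (α ≫ u).op b0), k' t σ = K α σ := by
    intro m t σ h1 α h2 h3
    have hC : t ∈ Cs m := ⟨α, h2, h3⟩
    rw [hk']
    dsimp only
    rw [dif_pos ⟨h1, hC⟩]
    obtain ⟨hs1, hs2⟩ := Classical.choose_spec (⟨h1, hC⟩ : t ∉ P.S m ∧ t ∈ Cs m).2
    rw [kuniq hs1 h2 (by rw [← hs2, ← h3])]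
  have knotin : ∀ {m : SimplexCategoryᵒᵖ} (t : B.obj m) (σ), (t ∈ P.S m ∨ t ∉ Cs m) →
      k' t σ = P.k t σ := by
    intro m t σ hcase
    rw [hk']
    dsimp only
    rw [dif_neg (fun hcontra => by tauto)]
  refine ⟨{ S := fun m => P.S m ∪ Cs m, k := k'
            closed := ?_, nat := ?_, zero := ?_, hA := ?_, kA := ?_ }, ⟨?_, ?_⟩, ?_⟩
  · -- closed
    rintro m m' φ t (ht | ⟨α, hα, rfl⟩)
    · exact Or.inl (P.closed φ t ht)
    · by_cases hs : Function.Surjective (φ.unop ≫ α).toOrderHom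
      · exact Or.inr ⟨φ.unop ≫ α, hs, (hcomp φ α).symm⟩
      · refine Or.inl ?_
        rw [← hcomp φ α]
        exact hsmall ((φ.unop ≫ α) ≫ u) (fun hs2 => hs (hsurj_of _ hs2))
  · -- nat
    rintro m m' φ t σ (ht | ⟨α, hα, rfl⟩)
    · rw [knotin t σ (Or.inl ht), knotin _ _ (Or.inl (P.closed φ t ht))]
      exact P.nat φ t σ ht
    · by_cases h1 : B.map (α ≫ u).op b0 ∈ P.S m
      · exact absurd h1 (fun hmem => hSepi (α ≫ u)
          (by haveI : Epi α := epi_iff_surjective.2 hα; exact epi_comp _ _) hmem)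
      · rw [kspec _ σ h1 α hα rfl]
        by_cases h2 : B.map φ (B.map (α ≫ u).op b0) ∈ P.S m'
        · -- mapped simplex already in S: use agreement on D0
          have hns : ¬ Function.Surjective (φ.unop ≫ α).toOrderHom := by
            intro hs
            exact hSepi ((φ.unop ≫ α) ≫ u)
              (by haveI : Epi (φ.unop ≫ α) := epi_iff_surjective.2 hs; exact epi_comp _ _)
              (by rw [hcomp]; exact h2)
          rw [knotin _ _ (Or.inl h2)]
          have hag := Kagree (φ.unop ≫ α) (φ.unop ≫ σ) (Or.inl hns)
          rw [← Knat φ α σ, hag]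
          rw [hcomp]
        · have hs : Function.Surjective (φ.unop ≫ α).toOrderHom := by
            by_contra hns
            exact h2 (by
              rw [← hcomp]
              exact hsmall ((φ.unop ≫ α) ≫ u) (fun hs2 => hns (hsurj_of _ hs2)))
          rw [kspec _ (φ.unop ≫ σ) (fun hmem => h2 hmem) (φ.unop ≫ α) hs (hcomp φ α).symm]
          exact Knat φ α σ
  · -- zero
    intro m t
    by_cases hc : t ∉ P.S m ∧ t ∈ Cs m
    · obtain ⟨h1, α, hα, h3⟩ := hc
      rw [kspec t (c0 m) h1 α hα h3]
      rw [Kagree α (c0 m) (Or.inr (isZero_c0 m))]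
      rw [P.zero, ← h3]
    · rw [knotin t (c0 m) (by tauto)]
      exact P.zero t
  · -- hA
    intro m a
    exact Or.inl (P.hA a)
  · -- kA
    intro m a σ
    rw [knotin _ σ (Or.inl (P.hA a))]
    exact P.kA a σ
  · -- P ≤ Q : subsets
    exact fun m => Set.subset_union_left
  · -- P ≤ Q : agreement
    intro m t σ ht
    exact (knotin t σ (Or.inl ht)).symm
  · -- ¬ Q ≤ P
    intro hQP
    have hb1 : B.map ((𝟙 ⦋nn⦌) ≫ u).op b0 ∈ P.S (op ⦋nn⦌) := by
      apply hQP.1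
      exact Or.inr ⟨𝟙 _, fun y => ⟨y, rfl⟩, rfl⟩
    exact hSepi _ (by rw [Category.id_comp]; exact hEu) hb1

/-- Any partial extension extends to all of `B`. -/
theorem extend {A B X : SSet} [SSet.KanComplex X] (i : A ⟶ B) (g : B ⟶ X)
    (hi : ∀ m, Function.Injective (i.app m))
    (H : ∀ ⦃m : SimplexCategoryᵒᵖ⦄, A.obj m → (m.unop ⟶ ⦋1⦌) → X.obj m)
    (Hnat : ∀ {m m' : SimplexCategoryᵒᵖ} (φ : m ⟶ m') (a : A.obj m) (σ),
      H (A.map φ a) (φ.unop ≫ σ) = X.map φ (H a σ))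
    (H0 : ∀ {m : SimplexCategoryᵒᵖ} (a : A.obj m), H a (c0 m) = g.app m (i.app m a)) :
    ∃ k : ∀ ⦃m : SimplexCategoryᵒᵖ⦄, B.obj m → (m.unop ⟶ ⦋1⦌) → X.obj m,
      (∀ {m m' : SimplexCategoryᵒᵖ} (φ : m ⟶ m') (t : B.obj m) (σ),
        k (B.map φ t) (φ.unop ≫ σ) = X.map φ (k t σ)) ∧
      (∀ {m : SimplexCategoryᵒᵖ} (a : A.obj m) (σ), k (i.app m a) σ = H a σ) := by
  obtain ⟨P, hP⟩ := exists_maximal_of_chains_bounded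
    (fun c hc => chains_bounded i g H (basePM i g H hi Hnat H0) c hc)
    (fun h1 h2 => PMle_trans h1 h2)
  have htot : ∀ (m : SimplexCategoryᵒᵖ) (t : B.obj m), t ∈ P.S m := by
    intro m t
    by_contra hts
    obtain ⟨Q, hPQ, hQP⟩ := not_maximal P m t hts
    exact hQP (hP Q hPQ)
  exact ⟨P.k, fun φ t σ => P.nat φ t σ (htot _ t), fun a σ => P.kA a σ⟩

/-- The explicit cylinder on `A`. -/
def Cyl (A : SSet) : SSet where
  obj m := A.obj m × (m.unop ⟶ ⦋1⦌)
  map φ := TypeCat.ofHom fun x => (A.map φ x.1, φ.unop ≫ x.2)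
  map_id := by
    intro m
    refine ConcreteCategory.hom_ext _ _ fun x => ?_
    exact Prod.ext (FunctorToTypes.map_id_apply A x.1)
      (by show (𝟙 m).unop ≫ x.2 = x.2; rw [unop_id, Category.id_comp])
  map_comp := by
    intro m m' m'' φ ψ
    refine ConcreteCategory.hom_ext _ _ fun x => ?_
    exact Prod.ext (FunctorToTypes.map_comp_apply A φ ψ x.1)
      (by show (φ ≫ ψ).unop ≫ x.2 = ψ.unop ≫ (φ.unop ≫ x.2); rw [unop_comp, Category.assoc])

/-- First projection of the cylinder. -/
def cylFst (A : SSet) : Cyl A ⟶ A where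
  app m := TypeCat.ofHom fun x => x.1
  naturality := by intros; rfl

/-- Second projection of the cylinder. -/
def cylSnd (A : SSet) : Cyl A ⟶ Δ[1] where
  app m := TypeCat.ofHom fun x => (SSet.stdSimplex.objEquiv).symm x.2
  naturality := by
    intro m m' φ
    ext x
    show (SSet.stdSimplex.objEquiv).symm (φ.unop ≫ x.2)
      = Δ[1].map φ ((SSet.stdSimplex.objEquiv).symm x.2)
    rw [SSet.stdSimplex.map_apply, Equiv.apply_symm_apply]

/-- The inclusion of `A` at time `0`. -/
def cylIns0 (A : SSet) : A ⟶ Cyl A where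
  app m := TypeCat.ofHom fun a => (a, c0 m)
  naturality := by
    intro m m' φ
    ext a
    exact Prod.ext rfl (c0_comp φ).symm

/-- The inclusion of `A` at time `1`. -/
def cylIns1 (A : SSet) : A ⟶ Cyl A where
  app m := TypeCat.ofHom fun a => (a, c1 m)
  naturality := by
    intro m m' φ
    ext a
    exact Prod.ext rfl (c1_comp φ).symm

lemma cylIns0_lift (A : SSet) :
    cylIns0 A ≫ Limits.prod.lift (cylFst A) (cylSnd A)
      = Limits.prod.lift (𝟙 A) (constMap A 0) := by
  apply Limits.prod.hom_ext
  · rw [Category.assoc, Limits.prod.lift_fst, Limits.prod.lift_fst]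
    apply SSet.hom_ext
    intro m
    ext a
    rfl
  · rw [Category.assoc, Limits.prod.lift_snd, Limits.prod.lift_snd]
    apply SSet.hom_ext
    intro m
    ext a
    rfl

lemma cylIns1_lift (A : SSet) :
    cylIns1 A ≫ Limits.prod.lift (cylFst A) (cylSnd A)
      = Limits.prod.lift (𝟙 A) (constMap A 1) := by
  apply Limits.prod.hom_ext
  · rw [Category.assoc, Limits.prod.lift_fst, Limits.prod.lift_fst]
    apply SSet.hom_ext
    intro m
    ext a
    rfl
  · rw [Category.assoc, Limits.prod.lift_snd, Limits.prod.lift_snd]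
    apply SSet.hom_ext
    intro m
    ext a
    rfl

end HEP

/-- If `i : A ↪ B` is a monomorphism of simplicial sets, `X` is a Kan complex, and
`f : A ⟶ X` extends over `B` up to homotopy (there is `g : B ⟶ X` with `g ∘ i ≃ f`),
then `f` extends strictly: there is `f' : B ⟶ X` with `f' ∘ i = f`. -/
theorem stmt8 (A B X : SSet) (i : A ⟶ B) [Mono i] [SSet.KanComplex X] (f : A ⟶ X)
    (g : B ⟶ X) (h : SHomotopic (i ≫ g) f) :
    ∃ f' : B ⟶ X, i ≫ f' = f := by
  obtain ⟨Hmap, hH0, hH1⟩ := h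
  set HH : HEP.Cyl A ⟶ X := Limits.prod.lift (HEP.cylFst A) (HEP.cylSnd A) ≫ Hmap with hHH
  have e0 : HEP.cylIns0 A ≫ HH = i ≫ g := by
    rw [hHH, ← Category.assoc, HEP.cylIns0_lift, hH0]
  have e1 : HEP.cylIns1 A ≫ HH = f := by
    rw [hHH, ← Category.assoc, HEP.cylIns1_lift, hH1]
  have hi : ∀ m, Function.Injective (i.app m) :=
    fun m => (CategoryTheory.mono_iff_injective _).1 inferInstance
  obtain ⟨k, knat, kA⟩ := HEP.extend i g hi (fun m a σ => HH.app m (a, σ))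
    (fun φ a σ => NatTrans.naturality_apply HH φ ((a, σ) : (HEP.Cyl A).obj _))
    (fun {m} a => congrArg (fun τ : A ⟶ X => τ.app m a) e0)
  refine ⟨{ app := fun m => TypeCat.ofHom fun t => k t (HEP.c1 m)
            naturality := by
              intro m m' φ
              ext t
              show k (B.map φ t) (HEP.c1 m') = X.map φ (k t (HEP.c1 m))
              rw [← HEP.c1_comp φ]
              exact knat φ t (HEP.c1 m) }, ?_⟩
  apply SSet.hom_ext
  intro m
  ext a
  show k (i.app m a) (HEP.c1 m) = f.app m a
  rw [kA a (HEP.c1 m)]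
  exact congrArg (fun τ : A ⟶ X => τ.app m a) e1
end

section
/- For a pointed simplicial space D, the Moore cycles, chains, and boundary maps fit into a homotopy fiber sequence Z_n(D) → C_n(D) → Z_{n−1}(D), induced by the cofiber sequence Δ^{n−1}/∂Δ^{n−1} → Δⁿ/Λⁿ₀ → Δⁿ/∂Δⁿ of pointed simplicial sets, provided D is Reedy fibrant. -/
open CategoryTheory Simplicial unitInterval

/-- A map of topological spaces is a Serre fibration if it has the homotopy lifting
property with respect to all cubes. -/
def IsSerreFib {E B : Type} [TopologicalSpace E] [TopologicalSpace B] (p : E → B) : Prop :=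
  ∀ (k : ℕ) (H : C((Fin k → I) × I, B)) (f : C(Fin k → I, E)),
    (∀ c, p (f c) = H (c, 0)) →
    ∃ F : C((Fin k → I) × I, E), (∀ c, F (c, 0) = f c) ∧ ∀ q, p (F q) = H q

/-- A pointed simplicial space `D` is Reedy fibrant if each map from `D_n` to the `n`-th
matching object (the space of compatible families of prospective faces) is a Serre
fibration, expressed by the homotopy lifting property against matching families. -/
def ReedyFib (D : SimplicialObject TopCat) : Prop :=
  IsSerreFib (fun x : D _⦋1⦌ => (D.δ 0 x, D.δ 1 x)) ∧
  ∀ (n k : ℕ) (H : C((Fin k → I) × I, Fin (n + 3) → D _⦋n + 1⦌)),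
    (∀ (q : (Fin k → I) × I) (i j : Fin (n + 3)) (hij : (i : ℕ) < (j : ℕ)),
      D.δ (⟨(i : ℕ), by omega⟩ : Fin (n + 2)) (H q j) =
        D.δ (⟨(j : ℕ) - 1, by omega⟩ : Fin (n + 2)) (H q i)) →
    ∀ f : C(Fin k → I, D _⦋n + 2⦌),
      (∀ c (i : Fin (n + 3)), D.δ i (f c) = H (c, 0) i) →
      ∃ F : C((Fin k → I) × I, D _⦋n + 2⦌),
        (∀ c, F (c, 0) = f c) ∧ ∀ q (i : Fin (n + 3)), D.δ i (F q) = H q i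

/-- The Moore chains subspace `C_{n+1}(D) = D[Δ^{n+1}/Λ^{n+1}₀]`: simplices all of whose
faces except the `0`-th are at the basepoint. -/
def chains (D : SimplicialObject TopCat) (pt : ∀ m : SimplexCategoryᵒᵖ, D.obj m)
    (n : ℕ) : Set (D _⦋n + 1⦌) :=
  {x | ∀ i : Fin (n + 2), 0 < (i : ℕ) →
    D.δ i x = pt (Opposite.op (SimplexCategory.mk n))}

/-- The Moore cycles subspace `Z_m(D) = D[Δ^m/∂Δ^m]`: simplices all of whose faces are at
the basepoint. -/
def cycles (D : SimplicialObject TopCat) (pt : ∀ m : SimplexCategoryᵒᵖ, D.obj m) :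
    (m : ℕ) → Set (D _⦋m⦌) := fun x => match x with
  | 0 => Set.univ
  | m + 1 => {x | ∀ i : Fin (m + 2), D.δ i x = pt (Opposite.op (SimplexCategory.mk m))}

theorem aux_delta_pt (D : SimplicialObject TopCat)
    (pt : ∀ m : SimplexCategoryᵒᵖ, D.obj m)
    (hpt : ∀ {m m' : SimplexCategoryᵒᵖ} (φ : m ⟶ m'), D.map φ (pt m) = pt m')
    (m : ℕ) (i : Fin (m + 2)) :
    D.δ i (pt (Opposite.op (SimplexCategory.mk (m + 1)))) =
      pt (Opposite.op (SimplexCategory.mk m)) :=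
  hpt _

theorem aux_delta_delta (D : SimplicialObject TopCat) (m : ℕ) (i : Fin (m + 2))
    (x : D _⦋m + 2⦌) :
    D.δ i (D.δ (0 : Fin (m + 3)) x) = D.δ (0 : Fin (m + 2)) (D.δ i.succ x) := by
  rw [← CategoryTheory.comp_apply, ← CategoryTheory.comp_apply]
  congr 1
  have h := D.δ_comp_δ (i := (0 : Fin (m + 2))) (j := i) (Fin.zero_le i)
  simpa using congrArg TopCat.Hom.hom h.symm

/-- For a Reedy fibrant pointed simplicial space `D`, the Moore cycles, chains and
boundary maps form a homotopy fiber sequence `Z_{n+1}(D) → C_{n+1}(D) → Z_n(D)` (induced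
by the cofiber sequence `Δ^n/∂Δ^n → Δ^{n+1}/Λ^{n+1}₀ → Δ^{n+1}/∂Δ^{n+1}`): the boundary
map `∂ = d₀` carries `C_{n+1}(D)` into `Z_n(D)`, the restricted map is a (Serre)
fibration, and its fiber over the basepoint is exactly `Z_{n+1}(D)`. -/
theorem stmt16 (D : SimplicialObject TopCat)
    (pt : ∀ m : SimplexCategoryᵒᵖ, D.obj m)
    (hpt : ∀ {m m' : SimplexCategoryᵒᵖ} (φ : m ⟶ m'), D.map φ (pt m) = pt m')
    (hreedy : ReedyFib D) (n : ℕ) :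
    ∃ hmapsto : Set.MapsTo (fun x => D.δ 0 x) (chains D pt n) (cycles D pt n),
      IsSerreFib hmapsto.restrict ∧
      ∀ x : D _⦋n + 1⦌,
        (x ∈ chains D pt n ∧ D.δ 0 x = pt (Opposite.op (SimplexCategory.mk n))) ↔
          x ∈ cycles D pt (n + 1) := by
  classical
  have hδpt := aux_delta_pt D pt hpt
  have hmapsto : Set.MapsTo (fun x => D.δ 0 x) (chains D pt n) (cycles D pt n) := by
    intro x hx
    cases n with
    | zero => trivial
    | succ m =>
      intro i
      rw [aux_delta_delta, hx i.succ (by simp), hδpt]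
  refine ⟨hmapsto, ?_, ?_⟩
  · -- the Serre fibration property
    cases n with
    | zero =>
      intro k H f hf
      set H' : C((Fin k → I) × I, D _⦋0⦌ × D _⦋0⦌) :=
        ⟨fun q => ((H q : D _⦋0⦌), pt (Opposite.op (SimplexCategory.mk 0))),
          by fun_prop⟩ with hH'
      set f' : C(Fin k → I, D _⦋1⦌) := ⟨fun c => (f c : D _⦋1⦌), by fun_prop⟩ with hf'
      have hcond : ∀ c, (fun x : D _⦋1⦌ => (D.δ 0 x, D.δ 1 x)) (f' c) = H' (c, 0) := by
        intro c
        refine Prod.ext ?_ ?_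
        · have h := congrArg Subtype.val (hf c)
          rw [Set.MapsTo.val_restrict_apply] at h
          exact h
        · exact (f c).2 1 (by simp)
      obtain ⟨F, hF0, hFp⟩ := hreedy.1 k H' f' hcond
      have hmem : ∀ q, F q ∈ chains D pt 0 := by
        intro q i hi
        have hi1 : i = 1 := Fin.ext (by simp only [Fin.val_one]; omega)
        subst hi1
        exact (Prod.ext_iff.mp (hFp q)).2
      refine ⟨⟨fun q => ⟨F q, hmem q⟩, F.continuous.subtype_mk _⟩, fun c => ?_, fun q => ?_⟩
      · exact Subtype.ext (hF0 c)
      · refine Subtype.ext ?_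
        rw [Set.MapsTo.val_restrict_apply]
        exact (Prod.ext_iff.mp (hFp q)).1
    | succ m =>
      intro k H f hf
      set H' : C((Fin k → I) × I, Fin (m + 3) → D _⦋m + 1⦌) :=
        ⟨fun q i => if i = 0 then (H q : D _⦋m + 1⦌)
            else pt (Opposite.op (SimplexCategory.mk (m + 1))),
          continuous_pi fun i => by
            by_cases h : i = 0 <;> simp only [h, reduceIte, if_neg] <;> fun_prop⟩
        with hH'
      set f' : C(Fin k → I, D _⦋m + 2⦌) := ⟨fun c => (f c : D _⦋m + 2⦌), by fun_prop⟩
        with hf'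
      have hcompat : ∀ (q : (Fin k → I) × I) (i j : Fin (m + 3)) (hij : (i : ℕ) < (j : ℕ)),
          D.δ (⟨(i : ℕ), by omega⟩ : Fin (m + 2)) (H' q j) =
            D.δ (⟨(j : ℕ) - 1, by omega⟩ : Fin (m + 2)) (H' q i) := by
        intro q i j hij
        have hj0 : j ≠ 0 := fun h => by simp [h] at hij
        by_cases hi0 : i = 0
        · have hHq := (H q).2
          simp only [cycles, Set.mem_setOf_eq] at hHq
          simp only [hH', hi0, hj0, ContinuousMap.coe_mk, if_pos, if_neg hj0, reduceIte]
          rw [hδpt]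
          exact (hHq _).symm
        · simp [hH', hi0, hj0, hδpt]
      have hinit : ∀ c (i : Fin (m + 3)), D.δ i (f' c) = H' (c, 0) i := by
        intro c i
        by_cases hi0 : i = 0
        · subst hi0
          have h := congrArg Subtype.val (hf c)
          rw [Set.MapsTo.val_restrict_apply] at h
          simpa [hH', hf'] using h
        · have hpos : 0 < (i : ℕ) :=
            Nat.pos_of_ne_zero fun h => hi0 (Fin.ext (by simp [h]))
          have h := (f c).2 i hpos
          simpa [hH', hf', hi0] using h
      obtain ⟨F, hF0, hFp⟩ := hreedy.2 m k H' hcompat f' hinit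
      have hmem : ∀ q, F q ∈ chains D pt (m + 1) := by
        intro q i hi
        have hi0 : i ≠ 0 := fun h => by simp [h] at hi
        have h := hFp q i
        simpa [hH', hi0] using h
      refine ⟨⟨fun q => ⟨F q, hmem q⟩, F.continuous.subtype_mk _⟩, fun c => ?_, fun q => ?_⟩
      · exact Subtype.ext (hF0 c)
      · refine Subtype.ext ?_
        rw [Set.MapsTo.val_restrict_apply]
        have h := hFp q 0
        simpa [hH'] using h
  · -- the fiber description
    intro x
    constructor
    · rintro ⟨hc, h0⟩
      intro i
      by_cases hi0 : i = 0
      · subst hi0; exact h0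
      · exact hc i (Nat.pos_of_ne_zero fun h => hi0 (Fin.ext (by simp [h])))
    · intro hx
      exact ⟨fun i _ => hx i, hx 0⟩
end
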